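/- Lower bound on hitting the hypergeometric mean: let n, d, l be positive integers with l < d < n, d dividing n·l, and l ≤ n·l/d ≤ n. Then the hypergeometric probability of drawing exactly l defectives in a sample of size n·l/d satisfies C(d,l)·C(n−d, nl/d − l) / C(n, nl/d) ≥ (4π²/e⁵)·(1/√l)·√(d/(d−l))·√(n/(n−d)). -/

import Mathlib

open Real Stirling

lemma sqrt_pi_le_stirlingSeq {k : ℕ} (hk : 1 ≤ k) : Real.sqrt π ≤ stirlingSeq k := by
  obtain ⟨j, rfl⟩ : ∃ j, k = j + 1 := ⟨k - 1, by omega⟩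
  have h1 : Filter.Tendsto (stirlingSeq ∘ Nat.succ) Filter.atTop (nhds (Real.sqrt π)) :=
    tendsto_stirlingSeq_sqrt_pi.comp (Filter.tendsto_add_atTop_nat 1)
  exact Stirling.stirlingSeq'_antitone.le_of_tendsto h1 j

lemma stirlingSeq_le {k : ℕ} (hk : 1 ≤ k) : stirlingSeq k ≤ Real.exp 1 / Real.sqrt 2 := by
  obtain ⟨j, rfl⟩ : ∃ j, k = j + 1 := ⟨k - 1, by omega⟩
  have := Stirling.stirlingSeq'_antitone (Nat.zero_le j)
  simpa [Stirling.stirlingSeq_one] using this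

noncomputable def Gf (k : ℕ) : ℝ := Real.sqrt (2 * k) * ((k : ℝ) / Real.exp 1) ^ k

lemma Gf_pos {k : ℕ} (hk : 1 ≤ k) : 0 < Gf k := by
  have : (0:ℝ) < k := by exact_mod_cast hk
  unfold Gf; positivity

lemma fact_lb {k : ℕ} (hk : 1 ≤ k) : Real.sqrt π * Gf k ≤ k.factorial := by
  have h : Real.sqrt π ≤ (k.factorial : ℝ) / Gf k := sqrt_pi_le_stirlingSeq hk
  rw [le_div_iff₀ (Gf_pos hk)] at h
  linarith

lemma fact_ub {k : ℕ} (hk : 1 ≤ k) :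
    (k.factorial : ℝ) ≤ (Real.exp 1 / Real.sqrt 2) * Gf k := by
  have h : (k.factorial : ℝ) / Gf k ≤ Real.exp 1 / Real.sqrt 2 := stirlingSeq_le hk
  rw [div_le_iff₀ (Gf_pos hk)] at h
  linarith

lemma pow_prod_identity (L U V W N D S F C : ℝ) (l u v w n d s f c : ℕ)
    (hn : n = l + u + v + w) (hd : d = l + u) (hs : s = l + v) (hf : f = v + w) (hc : c = u + w)
    (e1 : N * L = D * S) (e2 : N * U = D * C) (e3 : N * V = S * F) (e4 : N * W = C * F) :
    L ^ l * U ^ u * V ^ v * W ^ w * N ^ n = D ^ d * S ^ s * F ^ f * C ^ c := by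
  subst hn hd hs hf hc
  calc L ^ l * U ^ u * V ^ v * W ^ w * N ^ (l + u + v + w)
      = (N * L) ^ l * (N * U) ^ u * (N * V) ^ v * (N * W) ^ w := by
        rw [pow_add, pow_add, pow_add, mul_pow, mul_pow, mul_pow, mul_pow]; ring
    _ = (D * S) ^ l * (D * C) ^ u * (S * F) ^ v * (C * F) ^ w := by rw [e1, e2, e3, e4]
    _ = D ^ (l + u) * S ^ (l + v) * F ^ (v + w) * C ^ (u + w) := by
        rw [pow_add, pow_add, pow_add, pow_add, mul_pow, mul_pow, mul_pow, mul_pow]; ring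

lemma prod_le_prod4 {a1 a2 a3 a4 b1 b2 b3 b4 : ℝ} (ha1 : 0 ≤ a1) (ha2 : 0 ≤ a2) (ha3 : 0 ≤ a3)
    (ha4 : 0 ≤ a4) (h1 : a1 ≤ b1) (h2 : a2 ≤ b2) (h3 : a3 ≤ b3) (h4 : a4 ≤ b4) :
    a1 * a2 * a3 * a4 ≤ b1 * b2 * b3 * b4 :=
  mul_le_mul (mul_le_mul (mul_le_mul h1 h2 ha2 (ha1.trans h1)) h3 ha3
    (mul_nonneg (ha1.trans h1) (ha2.trans h2))) h4 ha4
    (mul_nonneg (mul_nonneg (ha1.trans h1) (ha2.trans h2)) (ha3.trans h3))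

lemma prod_le_prod5 {a1 a2 a3 a4 a5 b1 b2 b3 b4 b5 : ℝ} (ha1 : 0 ≤ a1) (ha2 : 0 ≤ a2)
    (ha3 : 0 ≤ a3) (ha4 : 0 ≤ a4) (ha5 : 0 ≤ a5) (h1 : a1 ≤ b1) (h2 : a2 ≤ b2) (h3 : a3 ≤ b3)
    (h4 : a4 ≤ b4) (h5 : a5 ≤ b5) :
    a1 * a2 * a3 * a4 * a5 ≤ b1 * b2 * b3 * b4 * b5 :=
  mul_le_mul (prod_le_prod4 ha1 ha2 ha3 ha4 h1 h2 h3 h4) h5 ha5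
    (mul_nonneg (mul_nonneg (mul_nonneg (ha1.trans h1) (ha2.trans h2)) (ha3.trans h3))
      (ha4.trans h4))

theorem hypergeometric_mean_hitting_lower_bound (n d l : ℕ)
    (hl : 0 < l) (hld : l < d) (hdn : d < n) (hdvd : d ∣ n * l)
    (hs1 : l ≤ n * l / d) (hs2 : n * l / d ≤ n) :
    (d.choose l : ℝ) * ((n - d).choose (n * l / d - l) : ℝ) / (n.choose (n * l / d) : ℝ) ≥
      (4 * Real.pi ^ 2 / (Real.exp 1) ^ 5) * (1 / Real.sqrt l) *
        Real.sqrt ((d : ℝ) / ((d : ℝ) - l)) * Real.sqrt ((n : ℝ) / ((n : ℝ) - d)) := by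
  set s := n * l / d with hs_def
  have hds : d * s = n * l := Nat.mul_div_cancel' hdvd
  have hls : l < s := by
    rcases Nat.lt_or_ge l s with h | h
    · exact h
    · exfalso
      have h1 : d * s ≤ d * l := Nat.mul_le_mul le_rfl h
      have h2 : d * l < n * l := Nat.mul_lt_mul_of_lt_of_le hdn le_rfl hl
      omega
  have hsn : s < n := by
    rcases Nat.lt_or_ge s n with h | h
    · exact h
    · exfalso
      have h1 : d * n ≤ d * s := Nat.mul_le_mul le_rfl h
      have h2 : n * l < n * d := Nat.mul_lt_mul_of_le_of_lt le_rfl hld (by omega)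
      have h3 : n * d = d * n := Nat.mul_comm n d
      omega
  set u := d - l with hu_def
  set v := s - l with hv_def
  have hd_eq : d = l + u := by omega
  have hs_eq : s = l + v := by omega
  have hu1 : 1 ≤ u := by omega
  have hv1 : 1 ≤ v := by omega
  have key : (l + u) * (l + v) = n * l := by rw [← hd_eq, ← hs_eq]; exact hds
  have hlt : l + u + v < n := by nlinarith [key, hl, hu1, hv1]
  set w := n - (l + u + v) with hw_def
  have hn_eq : n = l + u + v + w := by omega
  have hw1 : 1 ≤ w := by omega
  set f := n - d with hf_def
  set c := n - s with hc_def
  have hf_eq : f = v + w := by omega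
  have hc_eq : c = u + w := by omega
  -- real facts
  have hD : (d:ℝ) = (l:ℝ) + u := by exact_mod_cast hd_eq
  have hS : (s:ℝ) = (l:ℝ) + v := by exact_mod_cast hs_eq
  have hN : (n:ℝ) = (l:ℝ) + u + v + w := by exact_mod_cast hn_eq
  have hF : (f:ℝ) = (v:ℝ) + w := by exact_mod_cast hf_eq
  have hC : (c:ℝ) = (u:ℝ) + w := by exact_mod_cast hc_eq
  have hNLr : (n:ℝ) * l = (d:ℝ) * s := by exact_mod_cast hds.symm
  have hml : (l:ℝ) * w = (u:ℝ) * v := by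
    have h0 := hNLr
    rw [hD, hS, hN] at h0
    linear_combination h0
  have hNU : (n:ℝ) * u = (d:ℝ) * c := by rw [hN, hD, hC]; linear_combination -hml
  have hNV : (n:ℝ) * v = (s:ℝ) * f := by rw [hN, hS, hF]; linear_combination -hml
  have hNW : (n:ℝ) * w = (c:ℝ) * f := by rw [hN, hC, hF]; linear_combination hml
  -- positivity
  have hl0 : (0:ℝ) < l := by exact_mod_cast hl
  have hu0 : (0:ℝ) < u := by exact_mod_cast hu1
  have hv0 : (0:ℝ) < v := by exact_mod_cast hv1
  have hw0 : (0:ℝ) < w := by exact_mod_cast hw1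
  have hd0 : (0:ℝ) < d := by rw [hD]; positivity
  have hs0 : (0:ℝ) < s := by rw [hS]; positivity
  have hn0 : (0:ℝ) < n := by rw [hN]; positivity
  have hf0 : (0:ℝ) < f := by rw [hF]; positivity
  have hc0 : (0:ℝ) < c := by rw [hC]; positivity
  have hE : (0:ℝ) < Real.exp 1 := Real.exp_pos 1
  -- the power-product identity for the scaled variables
  have hP : ((l:ℝ)/Real.exp 1) ^ l * ((u:ℝ)/Real.exp 1) ^ u * ((v:ℝ)/Real.exp 1) ^ v *
      ((w:ℝ)/Real.exp 1) ^ w * ((n:ℝ)/Real.exp 1) ^ n =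
      ((d:ℝ)/Real.exp 1) ^ d * ((s:ℝ)/Real.exp 1) ^ s * ((f:ℝ)/Real.exp 1) ^ f *
      ((c:ℝ)/Real.exp 1) ^ c := by
    apply pow_prod_identity _ _ _ _ _ _ _ _ _ l u v w n d s f c hn_eq hd_eq hs_eq hf_eq hc_eq
    · rw [div_mul_div_comm, div_mul_div_comm, hNLr]
    · rw [div_mul_div_comm, div_mul_div_comm, hNU]
    · rw [div_mul_div_comm, div_mul_div_comm, hNV]
    · rw [div_mul_div_comm, div_mul_div_comm, hNW]
  -- sqrt identity
  have hsq : Real.sqrt (2*(d:ℝ)) * Real.sqrt (2*(f:ℝ)) * Real.sqrt (2*(s:ℝ)) *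
      Real.sqrt (2*(c:ℝ)) * Real.sqrt 2
      = Real.sqrt (2*(l:ℝ)) * Real.sqrt (2*(u:ℝ)) * Real.sqrt (2*(v:ℝ)) * Real.sqrt (2*(w:ℝ)) *
        Real.sqrt (2*(n:ℝ)) *
        ((1 / Real.sqrt l) * Real.sqrt ((d:ℝ)/u) * Real.sqrt ((n:ℝ)/f)) := by
    rw [one_div, ← Real.sqrt_inv]
    rw [← Real.sqrt_mul (show (0:ℝ) ≤ ((l:ℝ))⁻¹ by positivity) ((d:ℝ)/u),
        ← Real.sqrt_mul (show (0:ℝ) ≤ ((l:ℝ))⁻¹ * ((d:ℝ)/u) by positivity) ((n:ℝ)/f),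
        ← Real.sqrt_mul (show (0:ℝ) ≤ 2*(l:ℝ) by positivity) (2*(u:ℝ)),
        ← Real.sqrt_mul (show (0:ℝ) ≤ 2*(l:ℝ)*(2*(u:ℝ)) by positivity) (2*(v:ℝ)),
        ← Real.sqrt_mul (show (0:ℝ) ≤ 2*(l:ℝ)*(2*(u:ℝ))*(2*(v:ℝ)) by positivity) (2*(w:ℝ)),
        ← Real.sqrt_mul (show (0:ℝ) ≤ 2*(l:ℝ)*(2*(u:ℝ))*(2*(v:ℝ))*(2*(w:ℝ)) by positivity) (2*(n:ℝ)),
        ← Real.sqrt_mul (show (0:ℝ) ≤ 2*(l:ℝ)*(2*(u:ℝ))*(2*(v:ℝ))*(2*(w:ℝ))*(2*(n:ℝ)) by positivity)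
          (((l:ℝ))⁻¹ * ((d:ℝ)/u) * ((n:ℝ)/f)),
        ← Real.sqrt_mul (show (0:ℝ) ≤ 2*(d:ℝ) by positivity) (2*(f:ℝ)),
        ← Real.sqrt_mul (show (0:ℝ) ≤ 2*(d:ℝ)*(2*(f:ℝ)) by positivity) (2*(s:ℝ)),
        ← Real.sqrt_mul (show (0:ℝ) ≤ 2*(d:ℝ)*(2*(f:ℝ))*(2*(s:ℝ)) by positivity) (2*(c:ℝ)),
        ← Real.sqrt_mul (show (0:ℝ) ≤ 2*(d:ℝ)*(2*(f:ℝ))*(2*(s:ℝ))*(2*(c:ℝ)) by positivity) (2:ℝ)]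
    congr 1
    field_simp
    linear_combination (-1:ℝ)*((c:ℝ)*(f:ℝ)*hNV + (n:ℝ)*(v:ℝ)*hNW)
  -- Gf positivity
  have hGl := Gf_pos (show 1 ≤ l by omega)
  have hGu := Gf_pos (show 1 ≤ u by omega)
  have hGv := Gf_pos (show 1 ≤ v by omega)
  have hGw := Gf_pos (show 1 ≤ w by omega)
  have hGn := Gf_pos (show 1 ≤ n by omega)
  have hGd := Gf_pos (show 1 ≤ d by omega)
  have hGs := Gf_pos (show 1 ≤ s by omega)
  have hGf := Gf_pos (show 1 ≤ f by omega)
  have hGc := Gf_pos (show 1 ≤ c by omega)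
  -- numerator lower bound
  have hnum : Real.sqrt π ^ 4 * (Gf d * Gf f * Gf s * Gf c) ≤
      (d.factorial : ℝ) * f.factorial * s.factorial * c.factorial := by
    have b1 := fact_lb (show 1 ≤ d by omega)
    have b2 := fact_lb (show 1 ≤ f by omega)
    have b3 := fact_lb (show 1 ≤ s by omega)
    have b4 := fact_lb (show 1 ≤ c by omega)
    calc Real.sqrt π ^ 4 * (Gf d * Gf f * Gf s * Gf c)
        = Real.sqrt π * Gf d * (Real.sqrt π * Gf f) * (Real.sqrt π * Gf s) *
          (Real.sqrt π * Gf c) := by ring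
      _ ≤ (d.factorial : ℝ) * f.factorial * s.factorial * c.factorial :=
          prod_le_prod4 (mul_nonneg (Real.sqrt_nonneg _) hGd.le)
            (mul_nonneg (Real.sqrt_nonneg _) hGf.le) (mul_nonneg (Real.sqrt_nonneg _) hGs.le)
            (mul_nonneg (Real.sqrt_nonneg _) hGc.le) b1 b2 b3 b4
  -- denominator upper bound
  have hden : (l.factorial : ℝ) * u.factorial * v.factorial * w.factorial * n.factorial ≤
      (Real.exp 1 / Real.sqrt 2) ^ 5 * (Gf l * Gf u * Gf v * Gf w * Gf n) := by
    have b1 := fact_ub (show 1 ≤ l by omega)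
    have b2 := fact_ub (show 1 ≤ u by omega)
    have b3 := fact_ub (show 1 ≤ v by omega)
    have b4 := fact_ub (show 1 ≤ w by omega)
    have b5 := fact_ub (show 1 ≤ n by omega)
    have hq : (0:ℝ) < Real.exp 1 / Real.sqrt 2 := by positivity
    calc (l.factorial : ℝ) * u.factorial * v.factorial * w.factorial * n.factorial
        ≤ Real.exp 1 / Real.sqrt 2 * Gf l * (Real.exp 1 / Real.sqrt 2 * Gf u) *
          (Real.exp 1 / Real.sqrt 2 * Gf v) * (Real.exp 1 / Real.sqrt 2 * Gf w) *
          (Real.exp 1 / Real.sqrt 2 * Gf n) :=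
          prod_le_prod5 (by positivity) (by positivity) (by positivity) (by positivity)
            (by positivity) b1 b2 b3 b4 b5
      _ = (Real.exp 1 / Real.sqrt 2) ^ 5 * (Gf l * Gf u * Gf v * Gf w * Gf n) := by ring
  -- the key equality
  have hsl : Real.sqrt l ≠ 0 := ne_of_gt (Real.sqrt_pos.mpr hl0)
  have h2pos : (0:ℝ) < Real.sqrt 2 := by positivity
  have h25 : (Real.sqrt 2) ^ 5 = 4 * Real.sqrt 2 := by
    have h : (Real.sqrt 2) ^ 2 = 2 := Real.sq_sqrt (by norm_num)
    calc (Real.sqrt 2) ^ 5 = ((Real.sqrt 2) ^ 2) ^ 2 * Real.sqrt 2 := by ring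
      _ = 4 * Real.sqrt 2 := by rw [h]; norm_num
  have hpi4 : (Real.sqrt π) ^ 4 = π ^ 2 := by
    have h := Real.sq_sqrt (le_of_lt Real.pi_pos)
    calc (Real.sqrt π) ^ 4 = ((Real.sqrt π) ^ 2) ^ 2 := by ring
      _ = π ^ 2 := by rw [h]
  have hBpos : (0:ℝ) < (Real.exp 1 / Real.sqrt 2) ^ 5 * (Gf l * Gf u * Gf v * Gf w * Gf n) := by
    have : (0:ℝ) < Gf l * Gf u * Gf v * Gf w * Gf n :=
      mul_pos (mul_pos (mul_pos (mul_pos hGl hGu) hGv) hGw) hGn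
    positivity
  have hfinal : Real.sqrt π ^ 4 * (Gf d * Gf f * Gf s * Gf c) /
      ((Real.exp 1 / Real.sqrt 2) ^ 5 * (Gf l * Gf u * Gf v * Gf w * Gf n)) =
      4 * π ^ 2 / (Real.exp 1) ^ 5 * (1 / Real.sqrt l) * Real.sqrt ((d:ℝ)/u) *
        Real.sqrt ((n:ℝ)/f) := by
    have hPP : (0:ℝ) < ((d:ℝ)/Real.exp 1)^d * ((s:ℝ)/Real.exp 1)^s * ((f:ℝ)/Real.exp 1)^f *
        ((c:ℝ)/Real.exp 1)^c := by positivity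
    have hAgrp : Gf d * Gf f * Gf s * Gf c =
        Real.sqrt (2*(d:ℝ)) * Real.sqrt (2*(f:ℝ)) * Real.sqrt (2*(s:ℝ)) * Real.sqrt (2*(c:ℝ)) *
          (((d:ℝ)/Real.exp 1)^d * ((s:ℝ)/Real.exp 1)^s * ((f:ℝ)/Real.exp 1)^f *
            ((c:ℝ)/Real.exp 1)^c) := by
      simp only [Gf]; ring
    have hBgrp : Gf l * Gf u * Gf v * Gf w * Gf n =
        Real.sqrt (2*(l:ℝ)) * Real.sqrt (2*(u:ℝ)) * Real.sqrt (2*(v:ℝ)) * Real.sqrt (2*(w:ℝ)) *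
          Real.sqrt (2*(n:ℝ)) *
          (((d:ℝ)/Real.exp 1)^d * ((s:ℝ)/Real.exp 1)^s * ((f:ℝ)/Real.exp 1)^f *
            ((c:ℝ)/Real.exp 1)^c) := by
      simp only [Gf]; rw [← hP]; ring
    rw [hAgrp, hBgrp, div_eq_iff (by positivity)]
    refine mul_right_cancel₀ (ne_of_gt h2pos) ?_
    calc Real.sqrt π ^ 4 * (Real.sqrt (2*(d:ℝ)) * Real.sqrt (2*(f:ℝ)) * Real.sqrt (2*(s:ℝ)) *
          Real.sqrt (2*(c:ℝ)) * (((d:ℝ)/Real.exp 1)^d * ((s:ℝ)/Real.exp 1)^s *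
            ((f:ℝ)/Real.exp 1)^f * ((c:ℝ)/Real.exp 1)^c)) * Real.sqrt 2
        = π ^ 2 * ((Real.sqrt (2*(d:ℝ)) * Real.sqrt (2*(f:ℝ)) * Real.sqrt (2*(s:ℝ)) *
            Real.sqrt (2*(c:ℝ)) * Real.sqrt 2) * (((d:ℝ)/Real.exp 1)^d * ((s:ℝ)/Real.exp 1)^s *
            ((f:ℝ)/Real.exp 1)^f * ((c:ℝ)/Real.exp 1)^c)) := by rw [← hpi4]; ring
      _ = π ^ 2 * ((Real.sqrt (2*(l:ℝ)) * Real.sqrt (2*(u:ℝ)) * Real.sqrt (2*(v:ℝ)) *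
            Real.sqrt (2*(w:ℝ)) * Real.sqrt (2*(n:ℝ)) *
            ((1 / Real.sqrt l) * Real.sqrt ((d:ℝ)/u) * Real.sqrt ((n:ℝ)/f))) *
            (((d:ℝ)/Real.exp 1)^d * ((s:ℝ)/Real.exp 1)^s * ((f:ℝ)/Real.exp 1)^f *
            ((c:ℝ)/Real.exp 1)^c)) := by rw [hsq]
      _ = 4 * π ^ 2 / (Real.exp 1) ^ 5 * (1 / Real.sqrt l) * Real.sqrt ((d:ℝ)/u) *
            Real.sqrt ((n:ℝ)/f) *
            ((Real.exp 1 / Real.sqrt 2) ^ 5 * (Real.sqrt (2*(l:ℝ)) * Real.sqrt (2*(u:ℝ)) *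
              Real.sqrt (2*(v:ℝ)) * Real.sqrt (2*(w:ℝ)) * Real.sqrt (2*(n:ℝ)) *
              (((d:ℝ)/Real.exp 1)^d * ((s:ℝ)/Real.exp 1)^s * ((f:ℝ)/Real.exp 1)^f *
              ((c:ℝ)/Real.exp 1)^c))) * Real.sqrt 2 := by
          have hE5 : (Real.exp 1 / Real.sqrt 2) ^ 5 = (Real.exp 1) ^ 5 / (4 * Real.sqrt 2) := by
            rw [div_pow, h25]
          rw [hE5]; field_simp
  -- rewrite the goal
  have hDL : (d:ℝ) - l = (u:ℝ) := by rw [hD]; ring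
  have hND : (n:ℝ) - d = (f:ℝ) := by rw [hN, hD, hF]; ring
  rw [ge_iff_le, hDL, hND, Nat.cast_choose ℝ hld.le,
      Nat.cast_choose ℝ (show v ≤ f by omega), Nat.cast_choose ℝ hs2,
      ← hu_def, ← hc_def, show f - v = w from by omega]
  have hfacpos : ∀ k : ℕ, (0:ℝ) < k.factorial := fun k => by exact_mod_cast k.factorial_pos
  calc 4 * π ^ 2 / (Real.exp 1) ^ 5 * (1 / Real.sqrt l) * Real.sqrt ((d:ℝ)/u) *
        Real.sqrt ((n:ℝ)/f)
      = Real.sqrt π ^ 4 * (Gf d * Gf f * Gf s * Gf c) /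
        ((Real.exp 1 / Real.sqrt 2) ^ 5 * (Gf l * Gf u * Gf v * Gf w * Gf n)) := hfinal.symm
    _ ≤ ((d.factorial : ℝ) * f.factorial * s.factorial * c.factorial) /
        ((l.factorial : ℝ) * u.factorial * v.factorial * w.factorial * n.factorial) := by
        refine div_le_div₀ (by positivity) hnum (by positivity) hden
    _ = (d.factorial : ℝ) / ((l.factorial : ℝ) * u.factorial) *
        ((f.factorial : ℝ) / ((v.factorial : ℝ) * w.factorial)) /
        ((n.factorial : ℝ) / ((s.factorial : ℝ) * c.factorial)) := by
        have h1 := hfacpos l; have h2 := hfacpos u; have h3 := hfacpos v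
        have h4 := hfacpos w; have h5 := hfacpos n; have h6 := hfacpos s
        have h7 := hfacpos c
        field_simp
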